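/- In a commutative Kleene algebra (an idempotent commutative semiring with a Kleene star satisfying 1 + x·x* ≤ x* and the induction rule x + y·z ≤ y → x·z* ≤ y), for all elements e and f, one has e*·f* = (e+f)*. -/
import Mathlib


/-- In a commutative Kleene algebra (idempotent commutative semiring with a star
satisfying 1 + x·x* ≤ x* and the induction rule x + y·z ≤ y → x·z* ≤ y, where
a ≤ b means a + b = b), we have e*·f* = (e+f)*. -/
theorem stmt11 {K : Type*} [CommSemiring K] (hidem : ∀ x : K, x + x = x)
    (st : K → K)
    (hunfold : ∀ x : K, (1 + x * st x) + st x = st x)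
    (hind : ∀ x y z : K, (x + y * z) + y = y → x * st z + y = y)
    (e f : K) : st e * st f = st (e + f) := by
  -- basic order facts : a ≤ b means a + b = b
  have htrans : ∀ a b c : K, a + b = b → b + c = c → a + c = c := by
    intro a b c h1 h2
    rw [← h2, ← add_assoc, h1]
  have haddle : ∀ a b c : K, a + c = c → b + c = c → (a + b) + c = c := by
    intro a b c h1 h2
    rw [add_assoc, h2, h1]
  have hmulle : ∀ a b c : K, a + b = b → a * c + b * c = b * c := by
    intro a b c h
    rw [← add_mul, h]
  have one_le_st : ∀ x : K, 1 + st x = st x := by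
    intro x
    refine htrans 1 (1 + x * st x) (st x) ?_ (hunfold x)
    rw [← add_assoc, hidem 1]
  have xst_le : ∀ x : K, x * st x + st x = st x := by
    intro x
    refine htrans _ (1 + x * st x) (st x) ?_ (hunfold x)
    rw [add_comm 1 (x * st x), ← add_assoc, hidem]
  -- (e+f) * st(e+f) ≤ st(e+f), hence e * st(e+f) ≤ st(e+f) and f * ... ≤ ...
  have hef : (e + f) * st (e + f) + st (e + f) = st (e + f) := xst_le (e + f)
  have he1 : e * st (e + f) + st (e + f) = st (e + f) := by
    refine htrans _ ((e + f) * st (e + f)) _ ?_ hef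
    rw [add_mul, ← add_assoc, ← add_mul, hidem]
  have hf1 : f * st (e + f) + st (e + f) = st (e + f) := by
    refine htrans _ ((e + f) * st (e + f)) _ ?_ hef
    rw [add_mul, add_comm (e * st (e + f)), ← add_assoc, ← add_mul, hidem]
  -- st f ≤ st (e+f)
  have hstf : st f + st (e + f) = st (e + f) := by
    have := hind 1 (st (e + f)) f (by
      refine haddle _ _ _ (one_le_st (e + f)) ?_
      rw [mul_comm]; exact hf1)
    rwa [one_mul] at this
  -- st f * st e ≤ st (e+f)
  have main1 : st e * st f + st (e + f) = st (e + f) := by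
    rw [mul_comm]
    refine hind (st f) (st (e + f)) e ?_
    refine haddle _ _ _ hstf ?_
    rw [mul_comm]; exact he1
  -- reverse direction
  have one_le_mul : 1 + st e * st f = st e * st f := by
    refine htrans 1 (st f) _ (one_le_st f) ?_
    have := hmulle 1 (st e) (st f) (one_le_st e)
    rwa [one_mul] at this
  have keye : st e * st f * e + st e * st f = st e * st f := by
    have := hmulle (e * st e) (st e) (st f) (xst_le e)
    calc st e * st f * e + st e * st f
        = e * st e * st f + st e * st f := by ring_nf
      _ = st e * st f := this
  have keyf : st e * st f * f + st e * st f = st e * st f := by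
    have := hmulle (f * st f) (st f) (st e) (xst_le f)
    calc st e * st f * f + st e * st f
        = f * st f * st e + st f * st e := by ring_nf
      _ = st f * st e := this
      _ = st e * st f := mul_comm _ _
  have main2 : st (e + f) + st e * st f = st e * st f := by
    have := hind 1 (st e * st f) (e + f) (by
      refine haddle _ _ _ one_le_mul ?_
      rw [mul_add]
      exact haddle _ _ _ keye keyf)
    rwa [one_mul] at this
  -- antisymmetry
  calc st e * st f = st (e + f) + st e * st f := main2.symm
    _ = st e * st f + st (e + f) := add_comm _ _
    _ = st (e + f) := main1
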